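/- Let ψ, φ ∈ D(T̂) with additionally T̂ψ, T̂φ ∈ L²(ℝ; ℂ) and ψ(p)/√|p| → 0 and φ(p)/√|p| → 0 as |p| → ∞. Then ∫_ℝ conj((T̂ψ)(p)) · φ(p) dp = ∫_ℝ conj(ψ(p)) · (T̂φ)(p) dp; i.e., the covariant time operator T̂ is a symmetric operator on its domain D(T̂) in L²(ℝ). -/

import Mathlib

open MeasureTheory Filter

/-- The covariant time operator `(T̂ψ)(p) = i·s·(ψ′(p)/p − ψ(p)/(2p²))` in momentum
representation (symmetric ordering `(s/2)(t̂ p̂⁻¹ + p̂⁻¹ t̂)`). -/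
noncomputable def timeOp (s : ℝ) (ψ : ℝ → ℂ) (p : ℝ) : ℂ :=
  Complex.I * (s : ℂ) * (deriv ψ p / (p : ℂ) - ψ p / (2 * (p : ℂ) ^ 2))

private lemma sqrtAbs_hasDerivAt_real {p : ℝ} (hp : p ≠ 0) :
    HasDerivAt (fun q : ℝ => Real.sqrt |q|) (p / (2 * |p| * Real.sqrt |p|)) p := by
  rcases hp.lt_or_gt with h | h
  · have h1 : HasDerivAt (fun q : ℝ => Real.sqrt (-q)) (1 / (2 * Real.sqrt (-p)) * -1) p := by
      have := (Real.hasDerivAt_sqrt (x := -p) (by linarith)).comp p (hasDerivAt_neg p)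
      simpa [Function.comp_def] using this
    have h2 : HasDerivAt (fun q : ℝ => Real.sqrt |q|) (1 / (2 * Real.sqrt (-p)) * -1) p := by
      refine h1.congr_of_eventuallyEq ?_
      filter_upwards [Iio_mem_nhds h] with q hq
      rw [abs_of_neg hq]
    convert h2 using 1
    rw [abs_of_neg h]
    have hsne : Real.sqrt (-p) ≠ 0 := (Real.sqrt_pos.mpr (by linarith)).ne'
    field_simp
  · have h1 : HasDerivAt (fun q : ℝ => Real.sqrt |q|) (1 / (2 * Real.sqrt p)) p := by
      refine (Real.hasDerivAt_sqrt h.ne').congr_of_eventuallyEq ?_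
      filter_upwards [Ioi_mem_nhds h] with q hq
      rw [abs_of_pos hq]
    convert h1 using 1
    rw [abs_of_pos h]
    have hsne : Real.sqrt p ≠ 0 := (Real.sqrt_pos.mpr h).ne'
    field_simp

private lemma u_hasDerivAt {ψ : ℝ → ℂ} {p : ℝ} (hp : p ≠ 0) (hψd : DifferentiableAt ℝ ψ p) :
    HasDerivAt (fun q : ℝ => ψ q / (Real.sqrt |q| : ℂ))
      ((deriv ψ p * (Real.sqrt |p| : ℂ) -
          ψ p * ((p / (2 * |p| * Real.sqrt |p|) : ℝ) : ℂ)) / (Real.sqrt |p| : ℂ) ^ 2) p := by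
  have hne : ((Real.sqrt |p| : ℝ) : ℂ) ≠ 0 := by
    simp [Real.sqrt_ne_zero', abs_pos, hp]
  exact hψd.hasDerivAt.div (sqrtAbs_hasDerivAt_real hp).ofReal_comp hne

set_option maxHeartbeats 1000000 in
private lemma F_hasDerivAt (s : ℝ) (hs : s = 1 ∨ s = -1) (ψ φ : ℝ → ℂ) {p : ℝ} (hp : p ≠ 0)
    (hψd : DifferentiableAt ℝ ψ p) (hφd : DifferentiableAt ℝ φ p) :
    HasDerivAt
      (fun q : ℝ => (starRingEnd ℂ) (ψ q / (Real.sqrt |q| : ℂ)) * (φ q / (Real.sqrt |q| : ℂ)))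
      (Complex.I * s * ((p : ℂ) / ((|p| : ℝ) : ℂ)) *
        ((starRingEnd ℂ) (timeOp s ψ p) * φ p - (starRingEnd ℂ) (ψ p) * timeOp s φ p)) p := by
  have hu := u_hasDerivAt hp hψd
  have hv := u_hasDerivAt hp hφd
  have h1 := HasDerivAt.star hu
  have hF := HasDerivAt.mul h1 hv
  simp only [← starRingEnd_apply] at hF
  have hF' : HasDerivAt
      (fun q : ℝ => (starRingEnd ℂ) (ψ q / (Real.sqrt |q| : ℂ)) * (φ q / (Real.sqrt |q| : ℂ))) _ p := hF
  convert hF' using 1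
  have h2 : ((Real.sqrt |p| : ℝ) : ℂ) ≠ 0 := by
    simp [Real.sqrt_ne_zero', abs_pos, hp]
  have hpc : (p : ℂ) ≠ 0 := Complex.ofReal_ne_zero.mpr hp
  have hs2 : (s : ℂ) * (s : ℂ) = 1 := by rcases hs with rfl | rfl <;> norm_num
  simp only [timeOp, map_mul, map_sub, map_div₀, map_pow, map_ofNat, Complex.conj_I,
    Complex.conj_ofReal]
  rw [show Complex.I * ↑s * ((p:ℂ) / ((|p|:ℝ):ℂ)) *
      (-Complex.I * ↑s * ((starRingEnd ℂ) (deriv ψ p) / (p:ℂ) -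
          (starRingEnd ℂ) (ψ p) / (2 * (p:ℂ) ^ 2)) * φ p -
        (starRingEnd ℂ) (ψ p) * (Complex.I * ↑s * (deriv φ p / (p:ℂ) - φ p / (2 * (p:ℂ) ^ 2)))) =
      (↑s * ↑s) * (((p:ℂ) / ((|p|:ℝ):ℂ)) *
        (((starRingEnd ℂ) (deriv ψ p) / (p:ℂ) - (starRingEnd ℂ) (ψ p) / (2 * (p:ℂ) ^ 2)) * φ p +
          (starRingEnd ℂ) (ψ p) * (deriv φ p / (p:ℂ) - φ p / (2 * (p:ℂ) ^ 2)))) from by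
    linear_combination (-(↑s * ↑s * ((p:ℂ) / ((|p|:ℝ):ℂ)) *
      (((starRingEnd ℂ) (deriv ψ p) / (p:ℂ) - (starRingEnd ℂ) (ψ p) / (2 * (p:ℂ) ^ 2)) * φ p +
        (starRingEnd ℂ) (ψ p) * (deriv φ p / (p:ℂ) - φ p / (2 * (p:ℂ) ^ 2))))) * Complex.I_mul_I]
  rw [hs2, one_mul]
  rcases hp.lt_or_gt with h | h
  · rw [abs_of_neg h]
    have hc2 : ((p:ℝ):ℂ) = -(((Real.sqrt (-p) : ℝ):ℂ))^2 := by
      rw [← Complex.ofReal_pow, Real.sq_sqrt (by linarith)]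
      push_cast; ring
    have hcne : (((Real.sqrt (-p) : ℝ):ℂ)) ≠ 0 := by
      simpa [Real.sqrt_ne_zero'] using (by linarith : (0:ℝ) < -p)
    push_cast
    rw [hc2]
    field_simp [hcne]
    have hx : ((Real.sqrt (-p) : ℝ):ℂ) ^ 6 * (((Real.sqrt (-p) : ℝ):ℂ))⁻¹ ^ 6 = 1 := by
      rw [← mul_pow, mul_inv_cancel₀ hcne, one_pow]
    linear_combination
  · rw [abs_of_pos h]
    have hc2 : ((p:ℝ):ℂ) = (((Real.sqrt p : ℝ):ℂ))^2 := by
      rw [← Complex.ofReal_pow, Real.sq_sqrt h.le]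
    have hcne : (((Real.sqrt p : ℝ):ℂ)) ≠ 0 := by
      simpa [Real.sqrt_ne_zero'] using h
    push_cast
    rw [hc2]
    field_simp [hcne]

private lemma conj_mul_integrable {f g : ℝ → ℂ} (hf : MemLp f 2 (volume : Measure ℝ))
    (hg : MemLp g 2 (volume : Measure ℝ)) :
    Integrable (fun p : ℝ => (starRingEnd ℂ) (f p) * g p) volume := by
  have hcf : MemLp (fun p : ℝ => (starRingEnd ℂ) (f p)) 2 (volume : Measure ℝ) := by
    refine hf.of_le (RCLike.continuous_conj.comp_aestronglyMeasurable hf.1) ?_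
    filter_upwards with x
    simp
  have h1 : MemLp ((fun p : ℝ => (starRingEnd ℂ) (f p)) • g) 1 (volume : Measure ℝ) :=
    MemLp.smul (r := 1) hg hcf
  have := memLp_one_iff_integrable.mp h1
  simpa [Pi.smul_apply', smul_eq_mul, Pi.mul_def] using this

/-- The domain `D(T̂)` of the covariant time operator:  `ψ ∈ L²(ℝ)`, `ψ` differentiable
away from `0`, `ψ(p)/√|p| → 0` as `p → 0`, and `∫ |p|⁻¹·|d/dp(ψ(p)/√|p|)|² dp < ∞`. -/
def MemDomTimeOp (ψ : ℝ → ℂ) : Prop :=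
  MemLp ψ 2 (volume : Measure ℝ) ∧
  (∀ p : ℝ, p ≠ 0 → DifferentiableAt ℝ ψ p) ∧
  Tendsto (fun p : ℝ => ψ p / (Real.sqrt |p| : ℂ)) (nhdsWithin 0 {(0 : ℝ)}ᶜ) (nhds 0) ∧
  Integrable (fun p : ℝ =>
    |p|⁻¹ * ‖deriv (fun q : ℝ => ψ q / (Real.sqrt |q| : ℂ)) p‖ ^ 2)

set_option maxHeartbeats 1000000 in
/-- The covariant time operator `T̂` is a symmetric operator on its domain `D(T̂)` in
`L²(ℝ)`:  `⟨T̂ψ, φ⟩ = ⟨ψ, T̂φ⟩`. -/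
theorem timeOp_symmetric
    (s : ℝ) (hs : s = 1 ∨ s = -1) (ψ φ : ℝ → ℂ)
    (hψdom : MemDomTimeOp ψ) (hφdom : MemDomTimeOp φ)
    (hψT2 : MemLp (timeOp s ψ) 2 (volume : Measure ℝ))
    (hφT2 : MemLp (timeOp s φ) 2 (volume : Measure ℝ))
    (hψinf : Tendsto (fun p : ℝ => ψ p / (Real.sqrt |p| : ℂ)) (cocompact ℝ) (nhds 0))
    (hφinf : Tendsto (fun p : ℝ => φ p / (Real.sqrt |p| : ℂ)) (cocompact ℝ) (nhds 0)) :
    ∫ p : ℝ, starRingEnd ℂ (timeOp s ψ p) * φ p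
      = ∫ p : ℝ, starRingEnd ℂ (ψ p) * timeOp s φ p := by
  obtain ⟨hψ2, hψdiff, hψ0, -⟩ := hψdom
  obtain ⟨hφ2, hφdiff, hφ0, -⟩ := hφdom
  set F : ℝ → ℂ := fun q : ℝ =>
    (starRingEnd ℂ) (ψ q / (Real.sqrt |q| : ℂ)) * (φ q / (Real.sqrt |q| : ℂ)) with hF_def
  set G : ℝ → ℂ := fun p : ℝ =>
    (starRingEnd ℂ) (timeOp s ψ p) * φ p - (starRingEnd ℂ) (ψ p) * timeOp s φ p with hG_def
  have hsne : (Complex.I * (s : ℂ)) ≠ 0 :=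
    mul_ne_zero Complex.I_ne_zero (by rcases hs with rfl | rfl <;> norm_num)
  have hG1 : Integrable (fun p : ℝ => (starRingEnd ℂ) (timeOp s ψ p) * φ p) volume :=
    conj_mul_integrable hψT2 hφ2
  have hG2 : Integrable (fun p : ℝ => (starRingEnd ℂ) (ψ p) * timeOp s φ p) volume :=
    conj_mul_integrable hψ2 hφT2
  have hG : Integrable G volume := hG1.sub hG2
  have hF0 : F 0 = 0 := by simp [hF_def]
  have hFderiv : ∀ x : ℝ, x ≠ 0 →
      HasDerivAt F (Complex.I * s * ((x : ℂ) / ((|x| : ℝ) : ℂ)) * G x) x := fun x hx =>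
    F_hasDerivAt s hs ψ φ hx (hψdiff x hx) (hφdiff x hx)
  have hconj0 : Tendsto (⇑(starRingEnd ℂ)) (nhds (0 : ℂ)) (nhds (0 : ℂ)) := by
    simpa using (RCLike.continuous_conj (K := ℂ)).tendsto (0 : ℂ)
  have hFlim : ∀ l : Filter ℝ,
      Tendsto (fun p : ℝ => ψ p / (Real.sqrt |p| : ℂ)) l (nhds 0) →
      Tendsto (fun p : ℝ => φ p / (Real.sqrt |p| : ℂ)) l (nhds 0) →
      Tendsto F l (nhds 0) := by
    intro l h1 h2
    rw [hF_def]
    have h5 := (hconj0.comp h1).mul h2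
    rw [mul_zero] at h5
    exact h5.congr fun x => rfl
  have hF0' : Tendsto F (nhdsWithin 0 {(0 : ℝ)}ᶜ) (nhds 0) := hFlim _ hψ0 hφ0
  have hcc : atTop ≤ cocompact ℝ := by
    rw [cocompact_eq_atBot_atTop]; exact le_sup_right
  have hcc' : atBot ≤ cocompact ℝ := by
    rw [cocompact_eq_atBot_atTop]; exact le_sup_left
  have hFtop : Tendsto F atTop (nhds 0) :=
    hFlim _ (hψinf.mono_left hcc) (hφinf.mono_left hcc)
  have hFbot : Tendsto F atBot (nhds 0) :=
    hFlim _ (hψinf.mono_left hcc') (hφinf.mono_left hcc')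
  have hIoi : ∫ x in Set.Ioi (0 : ℝ), G x = 0 := by
    have hcont : ContinuousWithinAt F (Set.Ici (0 : ℝ)) 0 := by
      unfold ContinuousWithinAt
      rw [hF0, ← Set.Ioi_insert, nhdsWithin_insert]
      refine Tendsto.sup ?_ (hF0'.mono_left (nhdsWithin_mono _ fun x hx => ne_of_gt hx))
      simpa [hF0] using tendsto_pure_nhds F 0
    have hderiv : ∀ x ∈ Set.Ioi (0 : ℝ), HasDerivAt F (Complex.I * s * G x) x := by
      intro x hx
      have h := hFderiv x (ne_of_gt hx)
      rwa [abs_of_pos hx, div_self (by exact_mod_cast (ne_of_gt hx)), mul_one] at h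
    have h1 : ∫ x in Set.Ioi (0 : ℝ), Complex.I * s * G x = 0 - F 0 :=
      integral_Ioi_of_hasDerivAt_of_tendsto hcont hderiv
        ((hG.const_mul _).integrableOn) hFtop
    rw [hF0, sub_zero, MeasureTheory.integral_const_mul] at h1
    exact (mul_eq_zero.mp h1).resolve_left hsne
  have hIio : ∫ x in Set.Iio (0 : ℝ), G x = 0 := by
    have hcont : ContinuousWithinAt F (Set.Iic (0 : ℝ)) 0 := by
      unfold ContinuousWithinAt
      rw [hF0, ← Set.Iio_insert, nhdsWithin_insert]
      refine Tendsto.sup ?_ (hF0'.mono_left (nhdsWithin_mono _ fun x hx => ne_of_lt hx))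
      simpa [hF0] using tendsto_pure_nhds F 0
    have hderiv : ∀ x ∈ Set.Iio (0 : ℝ), HasDerivAt F (-(Complex.I * s * G x)) x := by
      intro x hx
      have h := hFderiv x (ne_of_lt hx)
      have hxc : ((x : ℝ) : ℂ) ≠ 0 := Complex.ofReal_ne_zero.mpr (ne_of_lt hx)
      have hdiv : ((x : ℝ) : ℂ) / ((|x| : ℝ) : ℂ) = -1 := by
        rw [abs_of_neg hx]
        push_cast
        field_simp
      rw [hdiv] at h
      convert h using 1
      ring
    have h1 : ∫ x in Set.Iic (0 : ℝ), -(Complex.I * s * G x) = F 0 - 0 :=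
      integral_Iic_of_hasDerivAt_of_tendsto hcont hderiv
        (((hG.const_mul (Complex.I * s)).neg).integrableOn) hFbot
    rw [hF0, sub_zero, MeasureTheory.integral_neg, neg_eq_zero,
      MeasureTheory.integral_const_mul] at h1
    have h2 := (mul_eq_zero.mp h1).resolve_left hsne
    rwa [MeasureTheory.integral_Iic_eq_integral_Iio] at h2
  have hzero : ∫ p : ℝ, G p = 0 := by
    have hsing : ∫ p in ({(0 : ℝ)} : Set ℝ), G p = 0 := by
      rw [Measure.restrict_eq_zero.mpr (by simp), integral_zero_measure]
    have hcompl := MeasureTheory.integral_add_compl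
      (MeasurableSet.singleton (0 : ℝ)) hG
    rw [← hcompl, hsing, zero_add, ← Set.Iio_union_Ioi,
      MeasureTheory.setIntegral_union ((Set.Iio_disjoint_Ici le_rfl).mono_right Set.Ioi_subset_Ici_self) measurableSet_Ioi
        hG.integrableOn hG.integrableOn, hIio, hIoi, add_zero]
  have hfin : ∫ p : ℝ, G p
      = (∫ p : ℝ, (starRingEnd ℂ) (timeOp s ψ p) * φ p)
        - ∫ p : ℝ, (starRingEnd ℂ) (ψ p) * timeOp s φ p := integral_sub hG1 hG2
  rw [hzero] at hfin
  exact sub_eq_zero.mp hfin.symm
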